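/- arXiv:0811.3792 — 4 statements merged into one kernel-verified Lean document; each statement's English description precedes it below -/
import Mathlib

section
/- Let K be a nonarchimedean field of characteristic zero with |p| = 1/p, and let b, T ∈ K. For r ∈ (0,1), if |b - T| < r·|b|, then |b^p - T^p| ≤ max{r^p·|b|^p, p^{-1}·r·|b|^p}. -/
theorem aux_sum_le {K : Type*} [Field K] {v : AbsoluteValue K ℝ}
    (hna : ∀ x y : K, v (x + y) ≤ max (v x) (v y))
    {ι : Type*} (s : Finset ι) (f : ι → K) (B : ℝ) (hB : 0 ≤ B)
    (hf : ∀ i ∈ s, v (f i) ≤ B) : v (∑ i ∈ s, f i) ≤ B := by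
  classical
  induction s using Finset.induction with
  | empty => simpa using hB
  | insert a s' hi ih =>
    rw [Finset.sum_insert hi]
    exact le_trans (hna _ _) (max_le (hf a (Finset.mem_insert_self _ _))
      (ih fun i hi' => hf i (Finset.mem_insert_of_mem hi')))

theorem aux_nat_le_one {K : Type*} [Field K] {v : AbsoluteValue K ℝ}
    (hna : ∀ x y : K, v (x + y) ≤ max (v x) (v y)) (n : ℕ) : v (n : K) ≤ 1 := by
  induction n with
  | zero => simp
  | succ n ih =>
    push_cast
    exact le_trans (hna n 1) (max_le ih (by simp))

/-- Let `K` be a nonarchimedean field of characteristic zero with `|p| = 1/p`,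
and let `b, T ∈ K`. For `r ∈ (0,1)`, if `|b - T| < r·|b|`, then
`|b^p - T^p| ≤ max (r^p·|b|^p) (p⁻¹·r·|b|^p)`. -/
theorem stmt0 {K : Type*} [Field K] [CharZero K] (p : ℕ) (hp : p.Prime)
    (v : AbsoluteValue K ℝ)
    (hna : ∀ x y : K, v (x + y) ≤ max (v x) (v y))
    (hvp : v (p : K) = 1 / p)
    (b T : K) (r : ℝ) (hr0 : 0 < r) (hr1 : r < 1)
    (h : v (b - T) < r * v b) :
    v (b ^ p - T ^ p) ≤ max (r ^ p * (v b) ^ p) ((p : ℝ)⁻¹ * r * (v b) ^ p) := by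
  have hvb : 0 < v b := by
    by_contra hc
    push_neg at hc
    have hb0 : v b = 0 := le_antisymm hc (v.nonneg b)
    rw [hb0, mul_zero] at h
    exact absurd h (not_lt.mpr (v.nonneg _))
  set ε := T - b with hεdef
  have hεv : v ε < r * v b := by rw [hεdef, v.map_sub]; exact h
  have hkey : b ^ p - T ^ p =
      -(∑ k ∈ Finset.range p, b ^ k * ε ^ (p - k) * (p.choose k : K)) := by
    have hT : T = b + ε := by rw [hεdef]; ring
    rw [hT, add_pow, Finset.sum_range_succ]
    simp [Nat.sub_self]
  rw [hkey, v.map_neg]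
  apply aux_sum_le hna
  · have h1 : (0:ℝ) ≤ r ^ p * (v b) ^ p := by positivity
    exact le_trans h1 (le_max_left _ _)
  intro k hk
  rw [Finset.mem_range] at hk
  rw [v.map_mul, v.map_mul, v.map_pow, v.map_pow]
  rcases Nat.eq_zero_or_pos k with hk0 | hk1
  · subst hk0
    simp only [pow_zero, one_mul, Nat.sub_zero, Nat.choose_zero_right, Nat.cast_one,
      v.map_one, mul_one]
    refine le_max_of_le_left ?_
    calc v ε ^ p ≤ (r * v b) ^ p := pow_le_pow_left₀ (v.nonneg _) hεv.le p
      _ = r ^ p * v b ^ p := mul_pow _ _ _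
  · refine le_max_of_le_right ?_
    have hC : v ((p.choose k : ℕ) : K) ≤ (p : ℝ)⁻¹ := by
      obtain ⟨m, hm⟩ := hp.dvd_choose_self hk1.ne' hk
      rw [hm]
      push_cast
      rw [v.map_mul, hvp, one_div]
      calc (p:ℝ)⁻¹ * v (m:K) ≤ (p:ℝ)⁻¹ * 1 := by
            have := aux_nat_le_one hna m
            gcongr
        _ = (p:ℝ)⁻¹ := mul_one _
    have hεk : v ε ^ (p - k) ≤ r * v b ^ (p - k) := by
      calc v ε ^ (p - k) ≤ (r * v b) ^ (p - k) := pow_le_pow_left₀ (v.nonneg _) hεv.le _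
        _ = r ^ (p - k) * v b ^ (p - k) := mul_pow _ _ _
        _ ≤ r * v b ^ (p - k) := by
            gcongr
            exact pow_le_of_le_one hr0.le hr1.le (Nat.sub_ne_zero_of_lt hk)
    calc v b ^ k * v ε ^ (p - k) * v ((p.choose k : ℕ) : K)
        ≤ v b ^ k * (r * v b ^ (p - k)) * (p : ℝ)⁻¹ := by
          gcongr
      _ = (p:ℝ)⁻¹ * r * (v b ^ k * v b ^ (p - k)) := by ring
      _ = (p:ℝ)⁻¹ * r * v b ^ p := by
          rw [← pow_add, Nat.add_sub_cancel' hk.le]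
end

section
/- Let K be a complete nonarchimedean field of characteristic zero with |p|=1/p, and let β ∈ K with |β| = 1. Suppose b > 0 and 0 < a < min{−log_θ p + b, pb} where θ ∈ (0,1). If |η₀| ≤ θ^b, |T′₀| < r·θ^b for r ∈ [0,1], then |(β+η₀+T′₀)^p − (β+η₀)^p| ≤ max{r^p·θ^{pb}, p^{−1}·r·θ^b} < r·θ^a. -/
private lemma vsum_le {K : Type*} [Field K] (v : AbsoluteValue K ℝ)
    (hna : ∀ x y : K, v (x + y) ≤ max (v x) (v y))
    {ι : Type*} (s : Finset ι) (f : ι → K) (M : ℝ) (hM : 0 ≤ M)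
    (h : ∀ i ∈ s, v (f i) ≤ M) : v (∑ i ∈ s, f i) ≤ M := by
  induction s using Finset.cons_induction with
  | empty => simpa using hM
  | cons i s hi ih =>
      rw [Finset.sum_cons]
      exact le_trans (hna _ _) (max_le (h _ (Finset.mem_cons_self _ _))
        (ih fun j hjs => h j (Finset.mem_cons_of_mem hjs)))

private lemma vnat_le_one {K : Type*} [Field K] (v : AbsoluteValue K ℝ)
    (hna : ∀ x y : K, v (x + y) ≤ max (v x) (v y)) (n : ℕ) : v (n : K) ≤ 1 := by
  induction n with
  | zero => simp
  | succ n ih =>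
      push_cast
      exact le_trans (hna _ _) (max_le ih (le_of_eq v.map_one))

/-- Let `K` be a complete nonarchimedean field of characteristic zero with
`|p| = 1/p`, and `β ∈ K` with `|β| = 1`.  Suppose `b > 0` and
`0 < a < min {−log_θ p + b, pb}` where `θ ∈ (0,1)`.  If `|η₀| ≤ θ^b` and `|T′₀| < r·θ^b` for
`r ∈ [0,1]`, then `|(β+η₀+T′₀)^p − (β+η₀)^p| ≤ max {r^p·θ^{pb}, p⁻¹·r·θ^b} < r·θ^a`. -/
theorem stmt3 {K : Type*} [Field K] [CharZero K] (p : ℕ) (hp : p.Prime)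
    (v : AbsoluteValue K ℝ) (hna : ∀ x y : K, v (x + y) ≤ max (v x) (v y))
    (hvp : v (p : K) = 1 / p)
    (θ a b r : ℝ) (hθ0 : 0 < θ) (hθ1 : θ < 1) (hb : 0 < b)
    (ha0 : 0 < a) (ha : a < min (-(Real.log p / Real.log θ) + b) (p * b))
    (hr : r ∈ Set.Icc (0 : ℝ) 1)
    (β η₀ T'₀ : K) (hβ : v β = 1) (hη : v η₀ ≤ θ ^ b) (hT : v T'₀ < r * θ ^ b) :
    v ((β + η₀ + T'₀) ^ p - (β + η₀) ^ p) ≤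
        max (r ^ p * θ ^ ((p : ℝ) * b)) ((p : ℝ)⁻¹ * r * θ ^ b) ∧
      max (r ^ p * θ ^ ((p : ℝ) * b)) ((p : ℝ)⁻¹ * r * θ ^ b) < r * θ ^ a := by
  obtain ⟨hr0, hr1⟩ := hr
  have hppos : (0:ℝ) < p := by exact_mod_cast hp.pos
  have hθb0 : (0:ℝ) < θ ^ b := Real.rpow_pos_of_pos hθ0 b
  have hθa0 : (0:ℝ) < θ ^ a := Real.rpow_pos_of_pos hθ0 a
  have hθb1 : θ ^ b < 1 := Real.rpow_lt_one hθ0.le hθ1 hb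
  have hrpos : 0 < r := by
    by_contra h
    push_neg at h
    have : r * θ ^ b ≤ 0 := mul_nonpos_of_nonpos_of_nonneg h hθb0.le
    exact absurd (lt_of_le_of_lt (v.nonneg _) hT) (not_lt.mpr this)
  have hT1 : v T'₀ ≤ 1 :=
    (hT.le.trans (by nlinarith : r * θ ^ b ≤ 1))
  have hx : v (β + η₀) ≤ 1 :=
    le_trans (hna _ _) (max_le hβ.le (hη.trans hθb1.le))
  -- expansion
  set x := β + η₀ with hxdef
  set t := T'₀ with htdef
  have hexp : (x + t) ^ p - x ^ p
      = ∑ k ∈ Finset.range p, x ^ k * t ^ (p - k) * (p.choose k : K) := by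
    rw [add_pow, Finset.sum_range_succ]
    simp
  constructor
  · rw [hexp]
    set M := max (r ^ p * θ ^ ((p : ℝ) * b)) ((p : ℝ)⁻¹ * r * θ ^ b) with hM
    have hM0 : 0 ≤ M := le_max_of_le_right (by positivity)
    refine vsum_le v hna _ _ M hM0 ?_
    intro k hk
    rw [Finset.mem_range] at hk
    rw [map_mul, map_mul, map_pow, map_pow]
    rcases eq_or_ne k 0 with hk0 | hk0
    · subst hk0
      simp only [pow_zero, one_mul, Nat.choose_zero_right, Nat.cast_one, map_one, mul_one,
        Nat.sub_zero]
      refine le_max_of_le_left ?_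
      have : v t ^ p ≤ (r * θ ^ b) ^ p := pow_le_pow_left₀ (v.nonneg _) hT.le p
      refine this.trans (le_of_eq ?_)
      rw [mul_pow, ← Real.rpow_natCast (θ ^ b) p, ← Real.rpow_mul hθ0.le, mul_comm b]
    · refine le_max_of_le_right ?_
      obtain ⟨m, hm⟩ := hp.dvd_choose_self hk0 hk
      have hvc : v (p.choose k : K) ≤ 1 / p := by
        rw [hm]
        push_cast
        rw [map_mul, hvp]
        have := vnat_le_one v hna m
        have h1p : (0:ℝ) ≤ 1 / p := by positivity
        nlinarith [v.nonneg (m : K)]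
      have htk : v t ^ (p - k) ≤ v t := by
        have : p - k ≠ 0 := Nat.sub_ne_zero_of_lt hk
        exact pow_le_of_le_one (v.nonneg _) hT1 this
      have hxk : v x ^ k ≤ 1 := pow_le_one₀ (v.nonneg _) hx
      calc v x ^ k * v t ^ (p - k) * v (p.choose k : K)
          ≤ 1 * v t * (1 / p) := by
            refine mul_le_mul (mul_le_mul hxk htk (by positivity) zero_le_one) hvc
              (v.nonneg _) (by positivity)
        _ ≤ 1 * (r * θ ^ b) * (1 / p) := by
            refine mul_le_mul_of_nonneg_right (mul_le_mul_of_nonneg_left hT.le zero_le_one)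
              (by positivity)
        _ = (p : ℝ)⁻¹ * r * θ ^ b := by ring
  · rw [max_lt_iff]
    have hlogθ : Real.log θ < 0 := Real.log_neg hθ0 hθ1
    constructor
    · have h1 : r ^ p ≤ r := pow_le_of_le_one hr0 hr1 hp.pos.ne'
      have h2 : θ ^ ((p:ℝ) * b) < θ ^ a :=
        Real.rpow_lt_rpow_of_exponent_gt hθ0 hθ1 (lt_of_lt_of_le ha (min_le_right _ _))
      calc r ^ p * θ ^ ((p:ℝ) * b) ≤ r * θ ^ ((p:ℝ) * b) := by
            exact mul_le_mul_of_nonneg_right h1 (Real.rpow_pos_of_pos hθ0 _).le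
        _ < r * θ ^ a := by exact mul_lt_mul_of_pos_left h2 hrpos
    · have hab : a - b < -(Real.log p / Real.log θ) := by
        have := lt_of_lt_of_le ha (min_le_left _ _)
        linarith
      have h3 : -Real.log p < (a - b) * Real.log θ := by
        rw [← neg_div] at hab
        have := mul_lt_mul_of_neg_right hab hlogθ
        rw [div_mul_cancel₀ _ hlogθ.ne] at this
        exact this
      have h4 : (1:ℝ) / p < θ ^ (a - b) := by
        rw [Real.rpow_def_of_pos hθ0]
        calc (1:ℝ)/p = Real.exp (-(Real.log p)) := by
              rw [Real.exp_neg, Real.exp_log hppos]; ring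
          _ < _ := Real.exp_lt_exp.mpr (by rw [mul_comm]; exact h3)
      have : (p:ℝ)⁻¹ * θ ^ b < θ ^ a := by
        have h5 := mul_lt_mul_of_pos_right h4 hθb0
        rw [← Real.rpow_add hθ0, sub_add_cancel] at h5
        calc (p:ℝ)⁻¹ * θ ^ b = 1 / p * θ ^ b := by rw [one_div]
          _ < θ ^ a := h5
      calc (p:ℝ)⁻¹ * r * θ ^ b = r * ((p:ℝ)⁻¹ * θ ^ b) := by ring
        _ < r * θ ^ a := mul_lt_mul_of_pos_left this hrpos
end

section
/- Let K be a complete discretely valued field of mixed characteristic (0,p) with uniformizer π_K, and let ϖ₁,…,ϖ_p be the roots of T^p + π_K T^{p−1} − π_K in a splitting field K_*. Then for any i ≠ j, the valuation v_{K_*}(ϖ_i − ϖ_j) = 2, where v_{K_*} is normalized so that v_{K_*}(ϖ_i) = 1. -/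
open Finset

section Helpers
variable {L : Type*} [Field L] (w : AbsoluteValue L ℝ)
  (hwna : ∀ x y : L, w (x + y) ≤ max (w x) (w y))
include hwna

lemma wadd_eq (x y : L) (h : w y < w x) : w (x + y) = w x := by
  refine le_antisymm ((hwna x y).trans (max_le le_rfl h.le)) ?_
  by_contra hlt
  push_neg at hlt
  have hx : x = x + y + -y := by ring
  have h2 : w x ≤ max (w (x + y)) (w (-y)) := by
    calc w x = w (x + y + -y) := by rw [← hx]
    _ ≤ _ := hwna _ _
  rw [w.map_neg] at h2
  exact absurd (h2.trans_lt (max_lt hlt h)) (lt_irrefl _)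

lemma wsum_le {ι : Type*} (s : Finset ι) (f : ι → L) (B : ℝ) (hB : 0 ≤ B)
    (h : ∀ i ∈ s, w (f i) ≤ B) : w (∑ i ∈ s, f i) ≤ B := by
  classical
  induction s using Finset.cons_induction with
  | empty => simpa using hB
  | cons a s' ha ih =>
      rw [Finset.sum_cons]
      exact (hwna _ _).trans (max_le (h a (mem_cons_self a s'))
        (ih fun i hi => h i (mem_cons_of_mem hi)))

lemma wnat_le (n : ℕ) : w (n : L) ≤ 1 := by
  induction n with
  | zero => simp
  | succ k ih =>
      push_cast
      exact (hwna k 1).trans (by simp [ih])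

end Helpers

/-- Let `K` be a complete discretely valued field of mixed characteristic
`(0,p)` with uniformizer `π_K` (`|π_K| = θ`, so `v_K(p) ≥ 1`, i.e. `|p| ≤ θ`), and let
`ϖ₁, ϖ₂` be two distinct roots of `T^p + π_K T^{p−1} − π_K` in an extension `L` with compatible
nonarchimedean absolute value `w`.  Then `v_{K_*}(ϖ₁ − ϖ₂) = 2` in the normalization with
`v_{K_*}(ϖ_i) = 1`; multiplicatively, `w (ϖ₁ − ϖ₂) = θ^{2/p}`. -/
theorem stmt6 {K L : Type*} [Field K] [CharZero K] [Field L] [Algebra K L]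
    (p : ℕ) (hp : p.Prime)
    (v : AbsoluteValue K ℝ) (hna : ∀ x y : K, v (x + y) ≤ max (v x) (v y))
    (θ : ℝ) (hθ0 : 0 < θ) (hθ1 : θ < 1)
    (hdisc : ∀ x : K, x ≠ 0 → ∃ n : ℤ, v x = θ ^ n)
    (hvp : v (p : K) ≤ θ)
    (π : K) (hπ : v π = θ)
    (w : AbsoluteValue L ℝ) (hwna : ∀ x y : L, w (x + y) ≤ max (w x) (w y))
    (hcompat : ∀ x : K, w (algebraMap K L x) = v x)
    (ϖ₁ ϖ₂ : L)
    (h₁ : ϖ₁ ^ p + algebraMap K L π * ϖ₁ ^ (p - 1) - algebraMap K L π = 0)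
    (h₂ : ϖ₂ ^ p + algebraMap K L π * ϖ₂ ^ (p - 1) - algebraMap K L π = 0)
    (hne : ϖ₁ ≠ ϖ₂) :
    w (ϖ₁ - ϖ₂) = θ ^ ((2 : ℝ) / p) := by
  have hKL : Function.Injective (algebraMap K L) := (algebraMap K L).injective
  have : CharZero L := charZero_of_injective_algebraMap hKL
  set c : L := algebraMap K L π with hc_def
  have hc : w c = θ := by rw [hc_def, hcompat, hπ]
  have hwp : w (p : L) ≤ θ := by
    have h0 : ((p : ℕ) : L) = algebraMap K L ((p : ℕ) : K) := by
      simp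
    rw [h0, hcompat]; exact hvp
  -- valuation of any root
  have root : ∀ z : L, z ^ p + c * z ^ (p - 1) - c = 0 → (w z) ^ p = θ ∧ w z < 1 := by
    intro z hz
    have hz0 : z ≠ 0 := by
      rintro rfl
      have e1 : (0 : L) ^ p = 0 := zero_pow hp.ne_zero
      have e2 : (0 : L) ^ (p - 1) = 0 := zero_pow (by have := hp.two_le; omega)
      have hc0 : c = 0 := by linear_combination e1 + c * e2 - hz
      rw [hc0] at hc
      simp only [map_zero] at hc
      exact hθ0.ne' hc.symm
    have heq : z ^ p = c * (1 - z ^ (p - 1)) := by linear_combination hz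
    have hW : (w z) ^ p = θ * w (1 - z ^ (p - 1)) := by
      rw [← map_pow, heq, map_mul, hc]
    have hble : w (1 - z ^ (p - 1)) ≤ max 1 ((w z) ^ (p - 1)) := by
      rw [sub_eq_add_neg]
      refine (hwna _ _).trans ?_
      rw [map_one, w.map_neg, map_pow]
    have hlt1 : w z < 1 := by
      by_contra hge
      push_neg at hge
      have h1le : (1 : ℝ) ≤ (w z) ^ (p - 1) := one_le_pow₀ hge
      have hbig : (w z) ^ p ≤ θ * (w z) ^ (p - 1) := by
        refine hW.le.trans (mul_le_mul_of_nonneg_left (hble.trans ?_) hθ0.le)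
        exact max_le h1le le_rfl
      have hsplit : (w z) ^ p = (w z) ^ (p - 1) * w z := by
        rw [← pow_succ]
        congr 1
        have := hp.two_le; omega
      rw [hsplit, mul_comm θ _] at hbig
      have hpos : (0 : ℝ) < (w z) ^ (p - 1) := lt_of_lt_of_le one_pos h1le
      have := le_of_mul_le_mul_left (by linarith [hbig] : (w z) ^ (p-1) * w z ≤ (w z) ^ (p-1) * θ) hpos
      linarith
    refine ⟨?_, hlt1⟩
    have hsm : w (z ^ (p - 1)) < 1 := by
      rw [map_pow]
      exact pow_lt_one₀ (w.nonneg z) hlt1 (by have := hp.two_le; omega)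
    have h1 : w (1 - z ^ (p - 1)) = 1 := by
      rw [sub_eq_add_neg, wadd_eq w hwna 1 (-(z ^ (p - 1))) (by rwa [w.map_neg, map_one]),
        map_one]
    rw [hW, h1, mul_one]
  obtain ⟨htp, ht1⟩ := root ϖ₁ h₁
  obtain ⟨hbp, hb1⟩ := root ϖ₂ h₂
  set t := w ϖ₁ with ht_def
  have hteq : w ϖ₂ = t := by
    have hpow : (w ϖ₂) ^ p = t ^ p := by rw [hbp, htp]
    exact le_antisymm
      ((pow_le_pow_iff_left₀ (w.nonneg _) (w.nonneg _) hp.ne_zero).1 hpow.le)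
      ((pow_le_pow_iff_left₀ (w.nonneg _) (w.nonneg _) hp.ne_zero).1 hpow.ge)
  have ht0 : 0 < t := by
    have hne0 : t ≠ 0 := fun h0 => hθ0.ne' (by rw [← htp, h0, zero_pow hp.ne_zero])
    exact lt_of_le_of_ne (w.nonneg ϖ₁) (Ne.symm hne0)
  have hδ0 : ϖ₁ - ϖ₂ ≠ 0 := sub_ne_zero.mpr hne
  set δ := ϖ₁ - ϖ₂ with hδ_def
  set x := w δ with hx_def
  have hmono : ∀ i j : ℕ, w (ϖ₁ ^ i * ϖ₂ ^ j) = t ^ (i + j) := by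
    intro i j
    rw [map_mul, map_pow, map_pow, hteq, ← ht_def, pow_add]
  rcases hp.eq_two_or_odd' with hp2 | hodd
  · -- p = 2
    subst hp2
    norm_num at h₁ h₂ ⊢
    have hsum : ϖ₁ + ϖ₂ = -c := by
      have hfac : δ * (ϖ₁ + ϖ₂ + c) = 0 := by
        rw [hδ_def]; linear_combination h₁ - h₂
      rcases mul_eq_zero.mp hfac with h | h
      · exact absurd h hδ0
      · linear_combination h
    have hδc : δ = -c + (-(2 * ϖ₂)) := by
      rw [hδ_def]; linear_combination hsum
    have hw2 : w (2 : L) ≤ θ := by exact_mod_cast hwp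
    have hsmall : w (-(2 * ϖ₂)) < w (-c) := by
      rw [w.map_neg, w.map_neg, map_mul, hc]
      calc w 2 * w ϖ₂ = w 2 * t := by rw [hteq]
      _ ≤ θ * t := mul_le_mul_of_nonneg_right hw2 ht0.le
      _ < θ * 1 := mul_lt_mul_of_pos_left ht1 hθ0
      _ = θ := mul_one θ
    rw [hx_def, hδ_def] at *
    rw [hδc, wadd_eq w hwna _ _ hsmall, w.map_neg, hc]
  · -- p odd, so p ≥ 3
    have hodd' := Nat.odd_iff.mp hodd
    obtain ⟨n, rfl⟩ : ∃ n, p = n + 3 := ⟨p - 3, by have := hp.two_le; omega⟩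
    have hq : n + 3 - 1 = n + 2 := by omega
    rw [hq] at h₁ h₂
    set S : L := ∑ i ∈ range (n + 3), ϖ₁ ^ i * ϖ₂ ^ (n + 2 - i) with hS_def
    set H : L := ∑ i ∈ range (n + 2), ϖ₁ ^ i * ϖ₂ ^ (n + 1 - i) with hH_def
    have hSδ : S * δ = ϖ₁ ^ (n + 3) - ϖ₂ ^ (n + 3) := by
      rw [hS_def, hδ_def]; exact geom_sum₂_mul ϖ₁ ϖ₂ (n + 3)
    have hHδ : H * δ = ϖ₁ ^ (n + 2) - ϖ₂ ^ (n + 2) := by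
      rw [hH_def, hδ_def]; exact geom_sum₂_mul ϖ₁ ϖ₂ (n + 2)
    have hsub : S + c * H = 0 := by
      have hfac : (S + c * H) * δ = 0 := by
        linear_combination hSδ + c * hHδ + h₁ - h₂
      rcases mul_eq_zero.mp hfac with h | h
      · exact h
      · exact absurd h hδ0
    have hSeq : S = -(c * H) := by linear_combination hsub
    -- binomial expansion
    have hbin := add_pow_prime_eq' hp ϖ₁ (-ϖ₂)
    set M : L := ∑ k ∈ Ioo 0 (n + 3),
        ϖ₁ ^ k * (-ϖ₂) ^ (n + 3 - k) * (((n + 3).choose k / (n + 3) : ℕ) : L) with hM_def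
    have hδp : δ ^ (n + 3) = ϖ₁ ^ (n + 3) - ϖ₂ ^ (n + 3) + ((n + 3 : ℕ) : L) * M := by
      have hneg : (-ϖ₂) ^ (n + 3) = -(ϖ₂ ^ (n + 3)) := Odd.neg_pow hodd ϖ₂
      rw [hδ_def, sub_eq_add_neg, hbin, hneg, hM_def]
      ring
    set N : L := ∑ k ∈ Ioo 0 (n + 3),
        (∑ j ∈ range k, ϖ₁ ^ j * ϖ₂ ^ (k - 1 - j)) * (-ϖ₂) ^ (n + 3 - k) *
          (((n + 3).choose k / (n + 3) : ℕ) : L) with hN_def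
    have hMN : M = δ * N +
        (∑ k ∈ Ioo 0 (n + 3), (-1 : L) ^ (n + 3 - k) * (((n + 3).choose k / (n + 3) : ℕ) : L)) *
          ϖ₂ ^ (n + 3) := by
      rw [hM_def, hN_def, Finset.mul_sum, Finset.sum_mul, ← Finset.sum_add_distrib]
      refine Finset.sum_congr rfl fun k hk => ?_
      rw [mem_Ioo] at hk
      have h1 : ϖ₁ ^ k = (∑ j ∈ range k, ϖ₁ ^ j * ϖ₂ ^ (k - 1 - j)) * δ + ϖ₂ ^ k := by
        rw [hδ_def, geom_sum₂_mul]; ring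
      have h2 : ϖ₂ ^ k * (-ϖ₂) ^ (n + 3 - k) = (-1 : L) ^ (n + 3 - k) * ϖ₂ ^ (n + 3) := by
        rw [neg_pow,
          show ϖ₂ ^ k * ((-1 : L) ^ (n + 3 - k) * ϖ₂ ^ (n + 3 - k)) =
            (-1 : L) ^ (n + 3 - k) * (ϖ₂ ^ k * ϖ₂ ^ (n + 3 - k)) from by ring,
          ← pow_add, show k + (n + 3 - k) = n + 3 from by omega]
      linear_combination ((-ϖ₂) ^ (n + 3 - k) * (((n + 3).choose k / (n + 3) : ℕ) : L)) * h1 +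
        (((n + 3).choose k / (n + 3) : ℕ) : L) * h2
    have hC : (∑ k ∈ Ioo 0 (n + 3), (-1 : L) ^ (n + 3 - k) *
        (((n + 3).choose k / (n + 3) : ℕ) : L)) = 0 := by
      have hb1' := add_pow_prime_eq' hp (1 : L) (-1 : L)
      simp only [one_pow, one_mul] at hb1'
      have hneg1 : ((-1 : L)) ^ (n + 3) = -1 := Odd.neg_one_pow hodd
      have h0 : ((1 : L) + -1) ^ (n + 3) = 0 := by
        rw [show (1 : L) + -1 = 0 from by ring, zero_pow (by omega : n + 3 ≠ 0)]
      have hz : ((n + 3 : ℕ) : L) * (∑ k ∈ Ioo 0 (n + 3), (-1 : L) ^ (n + 3 - k) *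
          (((n + 3).choose k / (n + 3) : ℕ) : L)) = 0 := by
        linear_combination -hb1' + h0 - hneg1
      have hp0 : ((n + 3 : ℕ) : L) ≠ 0 := Nat.cast_ne_zero.mpr (by omega)
      exact (mul_eq_zero.mp hz).resolve_left hp0
    have key : δ ^ (n + 2) = S + ((n + 3 : ℕ) : L) * N := by
      apply mul_right_cancel₀ hδ0
      rw [← pow_succ]
      linear_combination hδp + ((n + 3 : ℕ) : L) * hMN +
        ((n + 3 : ℕ) : L) * ϖ₂ ^ (n + 3) * hC - hSδ
    -- bounds
    have hHle : w H ≤ t ^ (n + 1) := by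
      rw [hH_def]
      refine wsum_le w hwna _ _ _ (by positivity) fun i hi => ?_
      rw [mem_range] at hi
      rw [hmono]
      exact le_of_eq (by rw [show i + (n + 1 - i) = n + 1 from by omega])
    have hgs : ∀ k : ℕ, 1 ≤ k →
        w (∑ j ∈ range k, ϖ₁ ^ j * ϖ₂ ^ (k - 1 - j)) ≤ t ^ (k - 1) := by
      intro k hk
      refine wsum_le w hwna _ _ _ (by positivity) fun j hj => ?_
      rw [mem_range] at hj
      rw [hmono]
      exact le_of_eq (by rw [show j + (k - 1 - j) = k - 1 from by omega])
    have hNle : w N ≤ t ^ (n + 2) := by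
      rw [hN_def]
      refine wsum_le w hwna _ _ _ (by positivity) fun k hk => ?_
      rw [mem_Ioo] at hk
      have e1 : w ((-ϖ₂) ^ (n + 3 - k)) = t ^ (n + 3 - k) := by
        rw [map_pow, w.map_neg, hteq]
      have e2 := hgs k hk.1
      have e3 := wnat_le w hwna ((n + 3).choose k / (n + 3))
      rw [map_mul, map_mul, e1]
      calc w (∑ j ∈ range k, ϖ₁ ^ j * ϖ₂ ^ (k - 1 - j)) * t ^ (n + 3 - k) *
            w ((((n + 3).choose k / (n + 3) : ℕ) : L))
          ≤ t ^ (k - 1) * t ^ (n + 3 - k) * 1 := by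
            refine mul_le_mul (mul_le_mul e2 le_rfl (by positivity) (by positivity)) e3
              (w.nonneg _) (by positivity)
        _ = t ^ (n + 2) := by
            rw [mul_one, ← pow_add, show k - 1 + (n + 3 - k) = n + 2 from by omega]
    have hwS_le : w S ≤ θ * t ^ (n + 1) := by
      rw [hSeq, w.map_neg, map_mul, hc]
      exact mul_le_mul_of_nonneg_left hHle hθ0.le
    have hwpN : w (((n + 3 : ℕ) : L) * N) ≤ θ * t ^ (n + 2) := by
      rw [map_mul]
      exact mul_le_mul hwp hNle (w.nonneg _) hθ0.le
    have hxle : x ≤ t ^ 2 := by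
      have h1 : x ^ (n + 2) ≤ (t ^ 2) ^ (n + 2) := by
        have e : x ^ (n + 2) = w (S + ((n + 3 : ℕ) : L) * N) := by
          rw [hx_def, ← map_pow, key]
        rw [e]
        refine (hwna _ _).trans (max_le ?_ ?_)
        · refine hwS_le.trans (le_of_eq ?_)
          rw [← htp]; ring
        · refine hwpN.trans ?_
          rw [← htp]
          calc t ^ (n + 3) * t ^ (n + 2) = t ^ (2 * n + 5) := by ring
            _ ≤ t ^ (2 * n + 4) := pow_le_pow_of_le_one ht0.le ht1.le (by omega)
            _ = (t ^ 2) ^ (n + 2) := by ring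
      exact (pow_le_pow_iff_left₀ (w.nonneg δ) (by positivity) (by omega)).1 h1
    -- exact value of w H
    set H₂ : L := ∑ i ∈ range (n + 2),
        (∑ j ∈ range i, ϖ₁ ^ j * ϖ₂ ^ (i - 1 - j)) * ϖ₂ ^ (n + 1 - i) with hH2_def
    have hH_split : H = ((n + 2 : ℕ) : L) * ϖ₂ ^ (n + 1) + δ * H₂ := by
      have e : ∀ i ∈ range (n + 2), ϖ₁ ^ i * ϖ₂ ^ (n + 1 - i) =
          ϖ₂ ^ (n + 1) + δ * ((∑ j ∈ range i, ϖ₁ ^ j * ϖ₂ ^ (i - 1 - j)) * ϖ₂ ^ (n + 1 - i)) := by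
        intro i hi
        rw [mem_range] at hi
        have h1 : ϖ₁ ^ i = (∑ j ∈ range i, ϖ₁ ^ j * ϖ₂ ^ (i - 1 - j)) * δ + ϖ₂ ^ i := by
          rw [hδ_def, geom_sum₂_mul]; ring
        have h2 : ϖ₂ ^ i * ϖ₂ ^ (n + 1 - i) = ϖ₂ ^ (n + 1) := by
          rw [← pow_add, show i + (n + 1 - i) = n + 1 from by omega]
        linear_combination ϖ₂ ^ (n + 1 - i) * h1 + h2
      rw [hH_def, Finset.sum_congr rfl e, Finset.sum_add_distrib, Finset.sum_const,
        card_range, nsmul_eq_mul, hH2_def, Finset.mul_sum]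
    have hwn2 : w (((n + 2 : ℕ) : L)) = 1 := by
      have hrw : ((n + 2 : ℕ) : L) = -1 + ((n + 3 : ℕ) : L) := by push_cast; ring
      rw [hrw, wadd_eq w hwna (-1) _ (by rw [w.map_neg, map_one]; exact hwp.trans_lt hθ1),
        w.map_neg, map_one]
    have hwH2 : w H₂ ≤ t ^ n := by
      rw [hH2_def]
      refine wsum_le w hwna _ _ _ (by positivity) fun i hi => ?_
      rw [mem_range] at hi
      rcases Nat.eq_zero_or_pos i with rfl | hi1
      · simp only [range_zero, Finset.sum_empty, zero_mul, map_zero]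
        positivity
      · rw [map_mul, map_pow, hteq]
        calc w (∑ j ∈ range i, ϖ₁ ^ j * ϖ₂ ^ (i - 1 - j)) * t ^ (n + 1 - i)
            ≤ t ^ (i - 1) * t ^ (n + 1 - i) :=
              mul_le_mul_of_nonneg_right (hgs i hi1) (by positivity)
          _ = t ^ n := by rw [← pow_add, show i - 1 + (n + 1 - i) = n from by omega]
    have hwδH2 : w (δ * H₂) < w (((n + 2 : ℕ) : L) * ϖ₂ ^ (n + 1)) := by
      rw [map_mul, map_mul, hwn2, one_mul, map_pow, hteq]
      calc w δ * w H₂ ≤ t ^ 2 * t ^ n := mul_le_mul hxle hwH2 (w.nonneg _) (by positivity)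
        _ = t ^ (n + 2) := by ring
        _ < t ^ (n + 1) := pow_lt_pow_right_of_lt_one₀ ht0 ht1 (by omega)
    have hwH : w H = t ^ (n + 1) := by
      rw [hH_split, wadd_eq w hwna _ _ hwδH2, map_mul, hwn2, one_mul, map_pow, hteq]
    have hwS : w S = θ * t ^ (n + 1) := by
      rw [hSeq, w.map_neg, map_mul, hc, hwH]
    have hfinal : x ^ (n + 2) = (t ^ 2) ^ (n + 2) := by
      have e : x ^ (n + 2) = w (S + ((n + 3 : ℕ) : L) * N) := by
        rw [hx_def, ← map_pow, key]
      have hsmall : w (((n + 3 : ℕ) : L) * N) < w S := by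
        rw [hwS]
        refine hwpN.trans_lt ?_
        rw [← htp]
        calc t ^ (n + 3) * t ^ (n + 2) = t ^ (2 * n + 5) := by ring
          _ < t ^ (2 * n + 4) := pow_lt_pow_right_of_lt_one₀ ht0 ht1 (by omega)
          _ = t ^ (n + 3) * t ^ (n + 1) := by ring
      rw [e, wadd_eq w hwna S _ hsmall, hwS, ← htp]
      ring
    have hxt : x = t ^ 2 := le_antisymm
      ((pow_le_pow_iff_left₀ (w.nonneg δ) (by positivity) (by omega : n + 2 ≠ 0)).1 hfinal.le)
      ((pow_le_pow_iff_left₀ (by positivity) (w.nonneg δ) (by omega : n + 2 ≠ 0)).1 hfinal.ge)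
    have hrpow : θ ^ ((2 : ℝ) / ((n + 3 : ℕ) : ℝ)) = t ^ (2 : ℕ) := by
      rw [← htp, ← Real.rpow_natCast t (n + 3), ← Real.rpow_mul ht0.le]
      rw [show ((n + 3 : ℕ) : ℝ) * ((2 : ℝ) / ((n + 3 : ℕ) : ℝ)) = (2 : ℝ) from by
        field_simp]
      rw [show (2 : ℝ) = ((2 : ℕ) : ℝ) from by norm_num, Real.rpow_natCast]
    calc w (ϖ₁ - ϖ₂) = x := rfl
      _ = t ^ 2 := hxt
      _ = θ ^ ((2 : ℝ) / ((n + 3 : ℕ) : ℝ)) := hrpow.symm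
end

section
/- Let K be a complete nonarchimedean field, ϖ₁,…,ϖ_p elements with |ϖ_i| = θ^{2/p} pairwise satisfying |ϖ_i − ϖ_j| = θ^{2/p} for i ≠ j (here after rescaling: the roots of T^p + πT^{p−1} − π). If z, δ₀ satisfy |z| ≤ 1, ∏_{γ=1}^p (z − ϖ_γ) = δ₀(1 − z^{p−1}), and |δ₀| ≤ θ^{a+1} with a > 1, then there is a unique index γ₀ such that |z − ϖ_{γ₀}| < |z − ϖ_γ| for all γ ≠ γ₀, and |z − ϖ_{γ₀}| = |δ₀|·θ^{−2(p−1)/p}. -/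
lemma iso_aux {L : Type*} [Field L] (w : AbsoluteValue L ℝ)
    (hna : ∀ x y : L, w (x + y) ≤ max (w x) (w y))
    {x y : L} (h : w y < w x) : w (x + y) = w x := by
  have h1 : w (x + y) ≤ w x := (hna x y).trans (max_le le_rfl h.le)
  refine le_antisymm h1 ?_
  have h2 : w x ≤ max (w (x + y)) (w y) := by
    have := hna (x + y) (-y)
    simpa [w.map_neg] using this
  by_contra hc
  push_neg at hc
  exact absurd h2 (not_le.2 (max_lt hc h))

/-- Let `L` be a complete nonarchimedean field and `ϖ₁,…,ϖ_p` elements with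
`|ϖ_γ| = θ^{2/p}` and pairwise `|ϖ_γ − ϖ_{γ'}| = θ^{2/p}` for `γ ≠ γ'`.  If `z, δ₀` satisfy
`|z| ≤ 1`, `∏_{γ} (z − ϖ_γ) = δ₀·(1 − z^{p−1})` and `|δ₀| ≤ θ^{a+1}` with `a > 1`, then there is
a unique index `γ₀` such that `|z − ϖ_{γ₀}| < |z − ϖ_γ|` for all `γ ≠ γ₀`, and
`|z − ϖ_{γ₀}| = |δ₀|·θ^{−2(p−1)/p}`. -/
theorem stmt7 {L : Type*} [Field L] (p : ℕ) (hp : p.Prime)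
    (w : AbsoluteValue L ℝ) (hna : ∀ x y : L, w (x + y) ≤ max (w x) (w y))
    (θ a : ℝ) (hθ0 : 0 < θ) (hθ1 : θ < 1) (ha : 1 < a)
    (ϖ : Fin p → L)
    (hw : ∀ γ, w (ϖ γ) = θ ^ ((2 : ℝ) / p))
    (hpair : ∀ γ γ', γ ≠ γ' → w (ϖ γ - ϖ γ') = θ ^ ((2 : ℝ) / p))
    (z δ₀ : L) (hz : w z ≤ 1)
    (heq : ∏ γ, (z - ϖ γ) = δ₀ * (1 - z ^ (p - 1)))
    (hδ : w δ₀ ≤ θ ^ (a + 1)) :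
    ∃! γ₀ : Fin p,
      (∀ γ, γ ≠ γ₀ → w (z - ϖ γ₀) < w (z - ϖ γ)) ∧
        w (z - ϖ γ₀) = w δ₀ * θ ^ (-(2 * ((p : ℝ) - 1) / p)) := by
  have hp2 : 2 ≤ p := hp.two_le
  have hpposR : (0 : ℝ) < p := by exact_mod_cast hp.pos
  set r : ℝ := θ ^ ((2 : ℝ) / p) with hr_def
  have hr0 : 0 < r := Real.rpow_pos_of_pos hθ0 _
  have hr1 : r < 1 := Real.rpow_lt_one hθ0.le hθ1 (by positivity)
  have hrp : r ^ p = θ ^ (2 : ℝ) := by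
    rw [hr_def, ← Real.rpow_natCast (θ ^ ((2:ℝ)/p)) p, ← Real.rpow_mul hθ0.le]
    rw [div_mul_cancel₀]
    exact ne_of_gt hpposR
  have hθa2 : θ ^ (a + 1) < θ ^ (2 : ℝ) :=
    Real.rpow_lt_rpow_of_exponent_gt hθ0 hθ1 (by linarith)
  have hone_le : w (1 - z ^ (p - 1)) ≤ 1 := by
    have := hna 1 (-(z ^ (p - 1)))
    have h2 : w (z ^ (p - 1)) ≤ 1 := by
      rw [map_pow]; exact pow_le_one₀ (w.nonneg z) hz
    have h2' : w (-(z ^ (p - 1))) ≤ 1 := by rw [w.map_neg]; exact h2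
    simpa [sub_eq_add_neg] using this.trans (max_le (le_of_eq w.map_one) h2')
  have wprod : ∏ γ, w (z - ϖ γ) = w δ₀ * w (1 - z ^ (p - 1)) := by
    rw [← map_prod, heq, map_mul]
  have hprod_lt : ∏ γ, w (z - ϖ γ) < θ ^ (2 : ℝ) := by
    rw [wprod]
    calc w δ₀ * w (1 - z ^ (p - 1)) ≤ θ ^ (a + 1) * 1 :=
          mul_le_mul hδ hone_le (w.nonneg _) (Real.rpow_nonneg hθ0.le _)
      _ < θ ^ (2 : ℝ) := by simpa using hθa2
  -- Step 1 : w z ≤ r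
  have hzle : w z ≤ r := by
    by_contra hc
    push_neg at hc
    have hall : ∀ γ, w (z - ϖ γ) = w z := by
      intro γ
      have : w (-ϖ γ) < w z := by rw [w.map_neg, hw γ]; exact hc
      simpa [sub_eq_add_neg] using iso_aux w hna this
    have hprod : ∏ γ, w (z - ϖ γ) = (w z) ^ p := by
      rw [Finset.prod_congr rfl fun γ _ => hall γ, Finset.prod_const,
        Finset.card_univ, Fintype.card_fin]
    rw [hprod, ← hrp] at hprod_lt
    exact absurd hprod_lt (not_lt.2 (pow_le_pow_left₀ hr0.le hc.le p))
  have hfac_le : ∀ γ, w (z - ϖ γ) ≤ r := by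
    intro γ
    have := hna z (-ϖ γ)
    have h2' : w (-ϖ γ) ≤ r := by rw [w.map_neg, hw γ]
    simpa [sub_eq_add_neg] using this.trans (max_le hzle h2')
  -- Step 2 : existence of a strictly smaller factor
  have hex : ∃ γ₀, w (z - ϖ γ₀) < r := by
    by_contra hc
    push_neg at hc
    have hall : ∀ γ, w (z - ϖ γ) = r := fun γ => le_antisymm (hfac_le γ) (hc γ)
    have hprod : ∏ γ, w (z - ϖ γ) = r ^ p := by
      rw [Finset.prod_congr rfl fun γ _ => hall γ, Finset.prod_const,
        Finset.card_univ, Fintype.card_fin]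
    rw [hprod, hrp] at hprod_lt
    exact lt_irrefl _ hprod_lt
  obtain ⟨γ₀, hγ₀⟩ := hex
  -- Step 3 : all other factors equal r
  have hother : ∀ γ, γ ≠ γ₀ → w (z - ϖ γ) = r := by
    intro γ hγ
    have hδγ : w (z - ϖ γ₀) < w (ϖ γ₀ - ϖ γ) := by
      rw [hpair γ₀ γ (Ne.symm hγ)]; exact hγ₀
    have : z - ϖ γ = (ϖ γ₀ - ϖ γ) + (z - ϖ γ₀) := by ring
    rw [this, iso_aux w hna hδγ, hpair γ₀ γ (Ne.symm hγ)]
  -- Step 4 : w (1 - z^(p-1)) = 1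
  have hone : w (1 - z ^ (p - 1)) = 1 := by
    have h2 : w (-(z ^ (p - 1))) < w (1 : L) := by
      rw [w.map_neg, map_pow, w.map_one]
      exact pow_lt_one₀ (w.nonneg z) (hzle.trans_lt hr1) (by omega)
    have := iso_aux w hna h2
    simpa [sub_eq_add_neg, w.map_one] using this
  -- Step 5 : the product equals w(z - ϖ γ₀) * r^(p-1)
  have hprod_eq : ∏ γ, w (z - ϖ γ) = w (z - ϖ γ₀) * r ^ (p - 1) := by
    rw [← Finset.mul_prod_erase Finset.univ _ (Finset.mem_univ γ₀)]
    congr 1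
    rw [Finset.prod_congr rfl fun γ hγ => hother γ (Finset.ne_of_mem_erase hγ),
      Finset.prod_const, Finset.card_erase_of_mem (Finset.mem_univ γ₀),
      Finset.card_univ, Fintype.card_fin]
  have key : w (z - ϖ γ₀) * r ^ (p - 1) = w δ₀ := by
    rw [← hprod_eq, wprod, hone, mul_one]
  have hrpm : r ^ (p - 1) = θ ^ (2 * ((p : ℝ) - 1) / p) := by
    rw [hr_def, ← Real.rpow_natCast (θ ^ ((2:ℝ)/p)) (p - 1), ← Real.rpow_mul hθ0.le]
    congr 1
    have : ((p - 1 : ℕ) : ℝ) = (p : ℝ) - 1 := by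
      have : ((p - 1 : ℕ) : ℝ) = ((p : ℕ) : ℝ) - 1 := by
        rw [Nat.cast_sub (by omega)]; simp
      simpa using this
    rw [this]; field_simp
  have hval : w (z - ϖ γ₀) = w δ₀ * θ ^ (-(2 * ((p : ℝ) - 1) / p)) := by
    have hne : r ^ (p - 1) ≠ 0 := pow_ne_zero _ hr0.ne'
    have : w (z - ϖ γ₀) = w δ₀ / r ^ (p - 1) := (eq_div_iff hne).mpr key
    rw [this, hrpm, Real.rpow_neg hθ0.le, div_eq_mul_inv]
  refine ⟨γ₀, ⟨fun γ hγ => ?_, hval⟩, fun γ₁ h₁ => ?_⟩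
  · rw [hother γ hγ]; exact hγ₀
  · by_contra hne
    have h10 := h₁.1 γ₀ (by simpa using (Ne.symm hne))
    have h01 : w (z - ϖ γ₀) < w (z - ϖ γ₁) := by
      rw [hother γ₁ hne]; exact hγ₀
    exact absurd h10 (not_lt.2 h01.le)
end
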